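/- If all entries of A satisfy |A_{ij}| ≤ 1, ‖x̃‖₂ ≤ 1 and ‖x̃‖₁ ≤ √k, and x̂ is the random sparsification of x̃ with parameter s, then E[((x̃ - x̂)ᵀA(x̃ - x̂))²] ≤ 3k²/s² + k²/s³ + 6√k/s. -/

import Mathlib

open Matrix
open scoped Classical

open MeasureTheory

section Aux
open ProbabilityTheory

lemma my_integrable_of_bdd {Ω : Type*} [MeasurableSpace Ω] {μ : Measure Ω}
    [IsProbabilityMeasure μ] {f : Ω → ℝ} (hf : Measurable f) (C : ℝ)
    (h : ∀ ω, |f ω| ≤ C) : Integrable f μ := by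
  refine Integrable.mono' (integrable_const C) hf.aestronglyMeasurable ?_
  exact Filter.Eventually.of_forall (fun ω => by simpa [Real.norm_eq_abs] using h ω)

lemma my_integral_prod {Ω ι : Type*} [MeasurableSpace Ω] {μ : Measure Ω}
    [IsProbabilityMeasure μ] (f : ι → Ω → ℝ) (hmeas : ∀ i, Measurable (f i))
    (hind : iIndepFun f μ) (S : Finset ι) :
    ∫ ω, ∏ i ∈ S, f i ω ∂μ = ∏ i ∈ S, ∫ ω, f i ω ∂μ := by
  classical
  induction S using Finset.induction_on with
  | empty => simp
  | @insert a S ha ih =>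
    have hI : IndepFun (f a) (∏ j ∈ S, f j) μ :=
      (hind.indepFun_finsetProd_of_notMem hmeas ha).symm
    have hPm : Measurable fun ω => ∏ j ∈ S, f j ω :=
      Finset.measurable_prod S (fun i _ => hmeas i)
    have hPm' : Measurable (∏ j ∈ S, f j) := by
      have : (∏ j ∈ S, f j) = fun ω => ∏ j ∈ S, f j ω := by
        funext ω; simp [Finset.prod_apply]
      rw [this]; exact hPm
    have h2 := hI.integral_mul_eq_mul_integral (hmeas a).aestronglyMeasurable hPm'.aestronglyMeasurable
    have hfun : (f a * ∏ j ∈ S, f j) = fun ω => f a ω * ∏ i ∈ S, f i ω := by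
      funext ω; simp [Finset.prod_apply]
    have hfun2 : (∏ j ∈ S, f j) = fun ω => ∏ i ∈ S, f i ω := by
      funext ω; simp [Finset.prod_apply]
    rw [hfun, hfun2] at h2
    have heq : ∫ ω, f a ω * ∏ i ∈ S, f i ω ∂μ = (∫ ω, f a ω ∂μ) * ∫ ω, ∏ i ∈ S, f i ω ∂μ := h2
    simp only [Finset.prod_insert ha]
    rw [show (∫ ω, f a ω * ∏ i ∈ S, f i ω ∂μ) = _ from heq, ih]

lemma my_integral_ite {Ω : Type*} [MeasurableSpace Ω] {μ : Measure Ω}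
    [IsProbabilityMeasure μ] {s : Set Ω} (hs : MeasurableSet s) (A B : ℝ) :
    ∫ ω, (if ω ∈ s then A else B) ∂μ = (μ s).toReal * A + (1 - (μ s).toReal) * B := by
  have h1 : ∀ ω, (if ω ∈ s then A else B)
      = s.indicator (fun _ => A - B) ω + B := by
    intro ω; by_cases h : ω ∈ s <;> simp [h]
  rw [integral_congr_ae (Filter.Eventually.of_forall h1)]
  rw [integral_add ((integrable_const (A - B)).indicator hs) (integrable_const B)]
  rw [integral_indicator_const _ hs]
  simp [smul_eq_mul]
  rw [measureReal_def]
  ring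

end Aux

set_option maxHeartbeats 1000000 in
theorem stmt13 {Ω : Type*} [MeasurableSpace Ω] (μ : Measure Ω) [IsProbabilityMeasure μ]
    (n : ℕ) (A : Matrix (Fin n) (Fin n) ℝ) (hA : A.PosSemidef)
    (hentries : ∀ i j, |A i j| ≤ 1)
    (k s : ℝ) (hs : 0 < s) (x : Fin n → ℝ)
    (hx2 : Real.sqrt (∑ i, (x i) ^ 2) ≤ 1)
    (hk : ∑ i, |x i| ≤ Real.sqrt k)
    (p : Fin n → ℝ) (hp : ∀ i, p i = min (s * |x i| / (∑ j, |x j|)) 1)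
    (E : Fin n → Set Ω) (hE : ∀ i, MeasurableSet (E i))
    (hμE : ∀ i, μ (E i) = ENNReal.ofReal (p i))
    (hind : ProbabilityTheory.iIndepSet E μ)
    (xhat : Ω → Fin n → ℝ)
    (hxhat : ∀ ω i, xhat ω i = if ω ∈ E i then x i / p i else 0) :
    (∫ ω, ((fun i => x i - xhat ω i) ⬝ᵥ A.mulVec (fun i => x i - xhat ω i)) ^ 2 ∂μ) ≤
      3 * k ^ 2 / s ^ 2 + k ^ 2 / s ^ 3 + 6 * Real.sqrt k / s := by
  -- notation
  set L : ℝ := ∑ j, |x j| with hLdef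
  have hL0 : 0 ≤ L := Finset.sum_nonneg (fun i _ => abs_nonneg _)
  have hRHSnn : 0 ≤ 6 * Real.sqrt k / s := by positivity
  have hpnn : ∀ i, 0 ≤ p i := by
    intro i; rw [hp i]
    rcases le_or_gt (s * |x i| / L) 1 with h | h
    · rw [min_eq_left h]; positivity
    · rw [min_eq_right h.le]; norm_num
  have hple : ∀ i, p i ≤ 1 := fun i => by rw [hp i]; exact min_le_right _ _
  have hpxz : ∀ i, p i = 0 → x i = 0 := by
    intro i h
    by_cases hL : L = 0
    · have h2 := (Finset.sum_eq_zero_iff_of_nonneg (fun j _ => abs_nonneg (x j))).1 hL i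
        (Finset.mem_univ i)
      exact abs_eq_zero.1 h2
    · rw [hp i] at h
      rcases min_eq_iff.1 h with ⟨h1, _⟩ | ⟨h1, _⟩
      · rcases div_eq_zero_iff.1 h1 with h2 | h2
        · rcases mul_eq_zero.1 h2 with h3 | h3
          · exact absurd h3 (ne_of_gt hs)
          · exact abs_eq_zero.1 h3
        · exact absurd h2 hL
      · norm_num at h1
  -- the centered variables
  set a : Fin n → ℝ := fun i => x i - x i / p i with hadef
  set y : Fin n → Ω → ℝ := fun i ω => if ω ∈ E i then a i else x i with hydef
  have hyx : ∀ ω, (fun i => x i - xhat ω i) = fun i => y i ω := by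
    intro ω; funext i
    rw [hxhat ω i, hydef]
    by_cases h : ω ∈ E i <;> simp [h, hadef]
  have hymeas : ∀ i, Measurable (y i) :=
    fun i => Measurable.ite (hE i) measurable_const measurable_const
  have hybdd : ∀ i ω, |y i ω| ≤ max |a i| |x i| := by
    intro i ω; rw [hydef]
    by_cases h : ω ∈ E i <;> simp [h, le_max_left, le_max_right]
  -- independence of y
  have hYind : ProbabilityTheory.iIndepFun y μ := by
    have h1 := ProbabilityTheory.iIndepSet.iIndepFun_indicator (m := Real.measurableSpace) hind
    have h2 := h1.comp (fun i (t : ℝ) => x i - t * (x i - a i))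
      (fun i => (measurable_const.sub (measurable_id.mul_const _)))
    have : y = fun i => (fun t : ℝ => x i - t * (x i - a i)) ∘
        fun ω => (E i).indicator (fun _ => (1:ℝ)) ω := by
      funext i ω
      by_cases h : ω ∈ E i <;> simp [hydef, h]
    rw [this]; exact h2
  -- moments
  set M : ℕ → Fin n → ℝ := fun r i => ∫ ω, (y i ω) ^ r ∂μ with hMdef
  have hμEr : ∀ i, (μ (E i)).toReal = p i := by
    intro i; rw [hμE i, ENNReal.toReal_ofReal (hpnn i)]
  have hM : ∀ r i, M r i = p i * (a i) ^ r + (1 - p i) * (x i) ^ r := by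
    intro r i
    show (∫ ω, (y i ω) ^ r ∂μ) = _
    have : ∀ ω, (y i ω) ^ r = if ω ∈ E i then (a i) ^ r else (x i) ^ r := by
      intro ω; rw [hydef]; by_cases h : ω ∈ E i <;> simp [h]
    rw [integral_congr_ae (Filter.Eventually.of_forall this), my_integral_ite (hE i), hμEr i]
  have hM0 : ∀ i, M 0 i = 1 := by intro i; rw [hM]; ring
  have haz : ∀ i, p i = 0 → a i = 0 := by
    intro i h; rw [hadef]; simp [hpxz i h]
  have hM1 : ∀ i, M 1 i = 0 := by
    intro i; rw [hM]
    by_cases h : p i = 0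
    · simp [h, hpxz i h]
    · have : p i * (x i / p i) = x i := by field_simp
      rw [hadef]; simp only [pow_one]
      nlinarith [this]
  have hm2nn : ∀ i, 0 ≤ M 2 i := by
    intro i; rw [hM]
    have h1 := hpnn i; have h2 := hple i
    nlinarith [sq_nonneg (a i), sq_nonneg (x i)]
  have hm4nn : ∀ i, 0 ≤ M 4 i := by
    intro i; rw [hM]
    have h1 := hpnn i; have h2 := hple i
    nlinarith [sq_nonneg (a i ^ 2), sq_nonneg (x i ^ 2)]
  have hplt : ∀ i, p i < 1 → p i = s * |x i| / L := by
    intro i h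
    rcases le_or_gt 1 (s * |x i| / L) with h' | h'
    · exfalso; rw [hp i, min_eq_right h'] at h; exact lt_irrefl _ h
    · rw [hp i]; exact min_eq_left h'.le
  have habs : ∀ i, |x i| ≤ L :=
    fun i => Finset.single_le_sum (f := fun j => |x j|) (fun j _ => abs_nonneg _)
      (Finset.mem_univ i)
  have hm2le : ∀ i, M 2 i ≤ |x i| * L / s := by
    intro i
    rcases eq_or_lt_of_le (hple i) with h1 | h1
    · have ha : a i = 0 := by rw [hadef]; simp only; rw [h1]; simp
      rw [hM, ha, ← h1]
      simp
      positivity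
    · have hpi := hplt i h1
      by_cases hz : x i = 0
      · have ha : a i = 0 := by rw [hadef]; simp [hz]
        rw [hM, ha, hz]
        simp
      · have hxpos : 0 < |x i| := abs_pos.2 hz
        have hLpos : 0 < L := lt_of_lt_of_le hxpos (habs i)
        have hppos : 0 < p i := by rw [hpi]; positivity
        have hM2 : M 2 i = x i ^ 2 * (1 - p i) / p i := by
          rw [hM, hadef]; field_simp; ring
        rw [hM2]
        have hle1 : x i ^ 2 * (1 - p i) / p i ≤ x i ^ 2 / p i := by
          gcongr
          nlinarith [mul_nonneg (sq_nonneg (x i)) hppos.le]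
        have heq : x i ^ 2 / p i = |x i| * L / s := by
          rw [show x i ^ 2 = |x i| ^ 2 from (sq_abs (x i)).symm, hpi]
          field_simp
        exact heq ▸ hle1
  have hm4le : ∀ i, M 4 i ≤ |x i| * L ^ 3 / s ^ 3 := by
    intro i
    rcases eq_or_lt_of_le (hple i) with h1 | h1
    · have ha : a i = 0 := by rw [hadef]; simp only; rw [h1]; simp
      rw [hM, ha, ← h1]
      simp
      positivity
    · have hpi := hplt i h1
      by_cases hz : x i = 0
      · have ha : a i = 0 := by rw [hadef]; simp [hz]
        rw [hM, ha, hz]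
        simp
      · have hxpos : 0 < |x i| := abs_pos.2 hz
        have hLpos : 0 < L := lt_of_lt_of_le hxpos (habs i)
        have hppos : 0 < p i := by rw [hpi]; positivity
        have hM4 : M 4 i = x i ^ 4 * ((1 - p i) ^ 4 + (1 - p i) * p i ^ 3) / p i ^ 3 := by
          rw [hM, hadef]; field_simp; ring
        have hq0 : (0:ℝ) ≤ 1 - p i := by linarith [hple i]
        have hnum : (1 - p i) ^ 4 + (1 - p i) * p i ^ 3 ≤ 1 := by
          have h2 : (1 - p i) ^ 4 ≤ 1 - p i :=
            pow_le_of_le_one hq0 (by linarith [hpnn i]) (by norm_num)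
          have h3 : (1 - p i) * p i ^ 3 ≤ p i := by
            nlinarith [mul_nonneg (mul_nonneg hppos.le hq0)
              (show (0:ℝ) ≤ 1 + p i by linarith [hpnn i]), pow_nonneg hppos.le 4]
          linarith
        have hx4 : (0:ℝ) ≤ x i ^ 4 := by positivity
        have hle1 : M 4 i ≤ x i ^ 4 / p i ^ 3 := by
          rw [hM4]
          gcongr
          nlinarith [mul_nonneg hx4 (sub_nonneg.2 hnum)]
        have h4 : |x i| ^ 4 = x i ^ 4 := by
          rw [show (4:ℕ) = 2*2 from rfl, pow_mul, sq_abs, ← pow_mul]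
        have heq : x i ^ 4 / p i ^ 3 = |x i| * L ^ 3 / s ^ 3 := by
          rw [hpi]
          field_simp
          linear_combination (-1) * h4
        exact heq ▸ hle1
  have hS2 : ∑ i, M 2 i ≤ L ^ 2 / s := by
    calc ∑ i, M 2 i ≤ ∑ i, |x i| * L / s := Finset.sum_le_sum (fun i _ => hm2le i)
    _ = L ^ 2 / s := by rw [← Finset.sum_div, ← Finset.sum_mul, ← hLdef]; ring
  have hS4 : ∑ i, M 4 i ≤ L ^ 4 / s ^ 3 := by
    calc ∑ i, M 4 i ≤ ∑ i, |x i| * L ^ 3 / s ^ 3 := Finset.sum_le_sum (fun i _ => hm4le i)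
    _ = L ^ 4 / s ^ 3 := by rw [← Finset.sum_div, ← Finset.sum_mul, ← hLdef]; ring
  have hS2nn : 0 ≤ ∑ i, M 2 i := Finset.sum_nonneg (fun i _ => hm2nn i)
  by_cases hLz : L = 0
  · have hxz : ∀ i, x i = 0 := fun i => abs_eq_zero.1
      ((Finset.sum_eq_zero_iff_of_nonneg (fun j _ => abs_nonneg (x j))).1 hLz i
        (Finset.mem_univ i))
    have hint0 : ∀ ω, ((fun i => x i - xhat ω i) ⬝ᵥ A.mulVec (fun i => x i - xhat ω i)) ^ 2
        = 0 := by
      intro ω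
      have hd : (fun i => x i - xhat ω i) = fun _ => (0:ℝ) := by
        funext i; rw [hxhat ω i, hxz i]; split <;> simp
      rw [hd]
      simp [dotProduct]
    rw [integral_congr_ae (Filter.Eventually.of_forall hint0)]
    simp only [integral_zero]
    positivity
  have hLpos : 0 < L := lt_of_le_of_ne hL0 (Ne.symm hLz)
  have hkpos : 0 < k := by
    by_contra h
    push_neg at h
    rw [Real.sqrt_eq_zero_of_nonpos h] at hk
    linarith
  have hL2k : L ^ 2 ≤ k := by
    have h := Real.sq_sqrt hkpos.le
    nlinarith [hk, hL0, Real.sqrt_nonneg k]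
  -- fourth-order expectation
  set T : Fin n → Fin n → Fin n → Fin n → ℝ :=
    fun i j k l => ∫ ω, y i ω * y j ω * y k ω * y l ω ∂μ with hTdef
  have hQ : ∀ ω, ((fun i => x i - xhat ω i) ⬝ᵥ A.mulVec (fun i => x i - xhat ω i)) ^ 2
      = ∑ q : (Fin n × Fin n) × Fin n × Fin n,
          (A q.1.1 q.1.2 * A q.2.1 q.2.2) *
            (y q.1.1 ω * y q.1.2 ω * y q.2.1 ω * y q.2.2 ω) := by
    intro ω
    rw [hyx ω]
    have h1 : ((fun i => y i ω) ⬝ᵥ A.mulVec (fun i => y i ω))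
        = ∑ q : Fin n × Fin n, A q.1 q.2 * (y q.1 ω * y q.2 ω) := by
      rw [Fintype.sum_prod_type]
      simp only [dotProduct, Matrix.mulVec, Finset.mul_sum]
      exact Finset.sum_congr rfl (fun i _ => Finset.sum_congr rfl (fun j _ => by ring))
    rw [h1, sq, Finset.sum_mul_sum]
    conv_rhs => rw [Fintype.sum_prod_type]
    apply Finset.sum_congr rfl
    intro q _
    apply Finset.sum_congr rfl
    intro r _
    ring
  have hintg : ∀ (i j k l : Fin n),
      Integrable (fun ω => y i ω * y j ω * y k ω * y l ω) μ := by
    intro i j k l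
    apply my_integrable_of_bdd ((((hymeas i).mul (hymeas j)).mul (hymeas k)).mul (hymeas l))
      ((max |a i| |x i|) * (max |a j| |x j|) * (max |a k| |x k|) * (max |a l| |x l|))
    intro ω
    simp only [Pi.mul_apply]
    rw [abs_mul, abs_mul, abs_mul]
    gcongr <;> first
      | exact hybdd _ _
      | exact abs_nonneg _
      | exact le_trans (abs_nonneg _) (hybdd _ _)
  have hLHS : (∫ ω, ((fun i => x i - xhat ω i) ⬝ᵥ A.mulVec (fun i => x i - xhat ω i)) ^ 2 ∂μ)
      = ∑ q : (Fin n × Fin n) × Fin n × Fin n,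
          (A q.1.1 q.1.2 * A q.2.1 q.2.2) * T q.1.1 q.1.2 q.2.1 q.2.2 := by
    rw [integral_congr_ae (Filter.Eventually.of_forall hQ)]
    rw [integral_finset_sum _ (fun q _ => (hintg q.1.1 q.1.2 q.2.1 q.2.2).const_mul _)]
    exact Finset.sum_congr rfl (fun q _ => integral_const_mul _ _)
  -- factorization of T as product of moments
  set cnt : Fin n → Fin n → Fin n → Fin n → Fin n → ℕ := fun i j k l m =>
    (if i = m then 1 else 0) + (if j = m then 1 else 0) + (if k = m then 1 else 0)
      + (if l = m then 1 else 0) with hcnt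
  have hTfact : ∀ i j k l, T i j k l = ∏ m, M (cnt i j k l m) m := by
    intro i j k l
    have hone : ∀ (i0 : Fin n) (ω : Ω),
        ∏ m, (y m ω) ^ (if i0 = m then 1 else 0) = y i0 ω := by
      intro i0 ω
      have h : ∀ m, (y m ω) ^ (if i0 = m then 1 else 0) = if i0 = m then y m ω else 1 := by
        intro m; split <;> simp
      simp_rw [h]
      simp [Finset.prod_ite_eq]
    have hprod : ∀ ω, y i ω * y j ω * y k ω * y l ω
        = ∏ m, (y m ω) ^ (cnt i j k l m) := by
      intro ω
      simp only [hcnt, pow_add]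
      rw [Finset.prod_mul_distrib, Finset.prod_mul_distrib, Finset.prod_mul_distrib]
      rw [hone i ω, hone j ω, hone k ω, hone l ω]
    show (∫ ω, y i ω * y j ω * y k ω * y l ω ∂μ) = _
    rw [integral_congr_ae (Filter.Eventually.of_forall hprod)]
    have hind2 : ProbabilityTheory.iIndepFun
        (fun m ω => (y m ω) ^ (cnt i j k l m)) μ := by
      have := hYind.comp (fun m (t : ℝ) => t ^ (cnt i j k l m))
        (fun m => measurable_id.pow_const _)
      exact this
    exact my_integral_prod _ (fun m => (hymeas m).pow_const _) hind2 Finset.univ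
  -- helpers for evaluating the product of moments
  have hprod_single : ∀ (e : Fin n → ℕ) (i : Fin n), (∀ m, m ≠ i → e m = 0) →
      (∏ m, M (e m) m) = M (e i) i := by
    intro e i h
    apply Finset.prod_eq_single
    · intro b _ hb; rw [h b hb, hM0]
    · intro h'; exact absurd (Finset.mem_univ i) h'
  have hprod_pair : ∀ (e : Fin n → ℕ) (i j : Fin n), i ≠ j →
      (∀ m, m ≠ i → m ≠ j → e m = 0) →
      (∏ m, M (e m) m) = M (e i) i * M (e j) j := by
    intro e i j hij h
    have h1 : ∏ m, M (e m) m = ∏ m ∈ ({i, j} : Finset (Fin n)), M (e m) m := by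
      symm
      apply Finset.prod_subset (Finset.subset_univ _)
      intro m _ hm
      simp only [Finset.mem_insert, Finset.mem_singleton] at hm
      push_neg at hm
      rw [h m hm.1 hm.2, hM0]
    rw [h1, Finset.prod_pair hij]
  have hTzero : ∀ i j k l (m : Fin n), cnt i j k l m = 1 → T i j k l = 0 := by
    intro i j k l m hm
    rw [hTfact]
    apply Finset.prod_eq_zero (Finset.mem_univ m)
    rw [hm]; exact hM1 m
  have hite_nn : ∀ (P : Prop) (_ : Decidable P) (t : ℝ), 0 ≤ t → 0 ≤ (if P then t else 0) := by
    intro P _ t ht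
    split
    · exact ht
    · exact le_rfl
  have habsle : ∀ (c t : ℝ), |c| ≤ 1 → 0 ≤ t → c * t ≤ t := by
    intro c t hc ht
    nlinarith [neg_abs_le c, le_abs_self c]
  have hA1 : ∀ (i j k l : Fin n), |A i j * A k l| ≤ 1 := by
    intro i j k l
    rw [abs_mul]
    exact mul_le_one₀ (hentries i j) (abs_nonneg _) (hentries k l)
  -- the per-tuple bound
  have hkey : ∀ i j k l : Fin n, A i j * A k l * T i j k l ≤
        (if i = j ∧ i = k ∧ i = l then M 4 i else 0)
      + (if i = j ∧ k = l ∧ ¬ i = k then M 2 i * M 2 k else 0)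
      + (if i = k ∧ j = l ∧ ¬ i = j then M 2 i * M 2 j else 0)
      + (if i = l ∧ j = k ∧ ¬ i = j then M 2 i * M 2 j else 0) := by
    intro i j k l
    have hRnn : (0:ℝ) ≤
        (if i = j ∧ i = k ∧ i = l then M 4 i else 0)
      + (if i = j ∧ k = l ∧ ¬ i = k then M 2 i * M 2 k else 0)
      + (if i = k ∧ j = l ∧ ¬ i = j then M 2 i * M 2 j else 0)
      + (if i = l ∧ j = k ∧ ¬ i = j then M 2 i * M 2 j else 0) := by
      refine add_nonneg (add_nonneg (add_nonneg ?_ ?_) ?_) ?_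
      · exact hite_nn _ _ _ (hm4nn i)
      · exact hite_nn _ _ _ (mul_nonneg (hm2nn i) (hm2nn k))
      · exact hite_nn _ _ _ (mul_nonneg (hm2nn i) (hm2nn j))
      · exact hite_nn _ _ _ (mul_nonneg (hm2nn i) (hm2nn j))
    by_cases hji : i = j
    · subst hji
      by_cases hlk : k = l
      · subst hlk
        by_cases hki : i = k
        · subst hki
          have hc : cnt i i i i i = 4 := by simp [hcnt]
          have hT : T i i i i = M 4 i := by
            rw [hTfact, hprod_single _ i (fun m hm => by simp [hcnt, Ne.symm hm]), hc]
          rw [hT]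
          rw [if_pos ⟨rfl, rfl, rfl⟩, if_neg (show ¬(i = i ∧ i = i ∧ ¬ i = i) by tauto)]
          have := habsle (A i i * A i i) (M 4 i) (hA1 i i i i) (hm4nn i)
          linarith
        · have hik : i ≠ k := hki
          have hci : cnt i i k k i = 2 := by simp [hcnt, Ne.symm hik]
          have hck : cnt i i k k k = 2 := by simp [hcnt, hik]
          have hT : T i i k k = M 2 i * M 2 k := by
            rw [hTfact, hprod_pair _ i k hik
              (fun m hmi hmk => by simp [hcnt, Ne.symm hmi, Ne.symm hmk]), hci, hck]
          rw [hT]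
          rw [if_neg (show ¬(i = i ∧ i = k ∧ i = k) by tauto), if_pos ⟨rfl, rfl, hki⟩,
            if_neg (show ¬(i = k ∧ i = k ∧ ¬ i = i) by tauto)]
          have := habsle (A i i * A k k) (M 2 i * M 2 k) (hA1 i i k k)
            (mul_nonneg (hm2nn i) (hm2nn k))
          linarith
      · have hT0 : T i i k l = 0 := by
          by_cases hki : i = k
          · subst hki
            apply hTzero i i i l l
            have hl : i ≠ l := hlk
            simp [hcnt, hl]
          · apply hTzero i i k l k
            have h2 : l ≠ k := fun h => hlk h.symm
            simp [hcnt, hki, h2]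
        rw [hT0, mul_zero]
        exact hRnn
    · by_cases hki : i = k
      · subst hki
        by_cases hlj : j = l
        · subst hlj
          have hij : i ≠ j := hji
          have hci : cnt i j i j i = 2 := by simp [hcnt, Ne.symm hij]
          have hcj : cnt i j i j j = 2 := by simp [hcnt, hij]
          have hT : T i j i j = M 2 i * M 2 j := by
            rw [hTfact, hprod_pair _ i j hij
              (fun m hmi hmj => by simp [hcnt, Ne.symm hmi, Ne.symm hmj]), hci, hcj]
          rw [hT]
          rw [if_neg (by tauto), if_neg (by tauto), if_pos ⟨rfl, rfl, hji⟩, if_neg (by tauto)]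
          have := habsle (A i j * A i j) (M 2 i * M 2 j) (hA1 i j i j)
            (mul_nonneg (hm2nn i) (hm2nn j))
          linarith
        · have hT0 : T i j i l = 0 := by
            apply hTzero i j i l j
            have h1 : i ≠ j := hji
            have h2 : l ≠ j := fun h => hlj h.symm
            simp [hcnt, h1, h2]
          rw [hT0, mul_zero]
          exact hRnn
      · by_cases hli : i = l
        · subst hli
          by_cases hkj : j = k
          · subst hkj
            have hij : i ≠ j := hji
            have hci : cnt i j j i i = 2 := by simp [hcnt, Ne.symm hij]
            have hcj : cnt i j j i j = 2 := by simp [hcnt, hij]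
            have hT : T i j j i = M 2 i * M 2 j := by
              rw [hTfact, hprod_pair _ i j hij
                (fun m hmi hmj => by simp [hcnt, Ne.symm hmi, Ne.symm hmj]), hci, hcj]
            rw [hT]
            rw [if_neg (show ¬(i = j ∧ i = j ∧ i = i) by tauto),
              if_neg (show ¬(i = j ∧ j = i ∧ ¬ i = j) by tauto), if_pos ⟨rfl, rfl, hji⟩]
            have := habsle (A i j * A j i) (M 2 i * M 2 j) (hA1 i j j i)
              (mul_nonneg (hm2nn i) (hm2nn j))
            linarith
          · have hT0 : T i j k i = 0 := by
              apply hTzero i j k i k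
              have h1 : i ≠ k := hki
              have h2 : j ≠ k := hkj
              simp [hcnt, h1, h2]
            rw [hT0, mul_zero]
            exact hRnn
        · have hT0 : T i j k l = 0 := by
            apply hTzero i j k l i
            have h1 : j ≠ i := fun h => hji h.symm
            have h2 : k ≠ i := fun h => hki h.symm
            have h3 : l ≠ i := fun h => hli h.symm
            simp [hcnt, h1, h2, h3]
          rw [hT0, mul_zero]
          exact hRnn
  -- helpers to collapse nested sums of ite
  have hcollapse : ∀ (f : Fin n → ℝ) (i : Fin n) (P : Prop) (_ : Decidable P),
      ∑ l, (if P ∧ i = l then f l else 0) = if P then f i else 0 := by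
    intro f i P _
    by_cases hP : P
    · simp [hP, Finset.sum_ite_eq]
    · simp [hP]
  have hpull : ∀ (P : Prop) (_ : Decidable P) (f : Fin n → ℝ),
      ∑ m, (if P then f m else 0) = if P then ∑ m, f m else 0 := by
    intro P _ f; split <;> simp
  have hsum4 : ∑ q : (Fin n × Fin n) × Fin n × Fin n,
      (if q.1.1 = q.1.2 ∧ q.1.1 = q.2.1 ∧ q.1.1 = q.2.2 then M 4 q.1.1 else 0)
      = ∑ i, M 4 i := by
    simp only [Fintype.sum_prod_type, ← and_assoc]
    calc (∑ i, ∑ j, ∑ k, ∑ l, (if ((i = j ∧ i = k) ∧ i = l) then M 4 i else 0))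
        = ∑ i : Fin n, ∑ j : Fin n, ∑ k : Fin n, (if i = j ∧ i = k then M 4 i else 0) := by
          refine Finset.sum_congr rfl (fun i _ => Finset.sum_congr rfl (fun j _ =>
            Finset.sum_congr rfl (fun k _ => hcollapse (fun _ => M 4 i) i _ _)))
      _ = ∑ i : Fin n, ∑ j : Fin n, (if i = j then M 4 i else 0) := by
          refine Finset.sum_congr rfl (fun i _ => Finset.sum_congr rfl (fun j _ =>
            hcollapse (fun _ => M 4 i) i _ _))
      _ = ∑ i, M 4 i := by
          refine Finset.sum_congr rfl (fun i _ => ?_)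
          simp [Finset.sum_ite_eq]
  have hsum2a : ∑ q : (Fin n × Fin n) × Fin n × Fin n,
      (if q.1.1 = q.1.2 ∧ q.2.1 = q.2.2 then M 2 q.1.1 * M 2 q.2.1 else 0)
      = (∑ i, M 2 i) * (∑ i, M 2 i) := by
    simp only [Fintype.sum_prod_type]
    calc (∑ i, ∑ j, ∑ k, ∑ l, (if (i = j ∧ k = l) then M 2 i * M 2 k else 0))
        = ∑ i : Fin n, ∑ j : Fin n, ∑ k : Fin n, (if i = j then M 2 i * M 2 k else 0) := by
          refine Finset.sum_congr rfl (fun i _ => Finset.sum_congr rfl (fun j _ =>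
            Finset.sum_congr rfl (fun k _ => hcollapse (fun _ => M 2 i * M 2 k) k _ _)))
      _ = ∑ i : Fin n, ∑ j : Fin n, (if i = j then ∑ k, M 2 i * M 2 k else 0) := by
          refine Finset.sum_congr rfl (fun i _ => Finset.sum_congr rfl (fun j _ =>
            hpull _ _ _))
      _ = ∑ i : Fin n, ∑ k, M 2 i * M 2 k := by
          refine Finset.sum_congr rfl (fun i _ => ?_)
          simp [Finset.sum_ite_eq]
      _ = (∑ i, M 2 i) * (∑ i, M 2 i) := by
          rw [Finset.sum_mul]
          exact Finset.sum_congr rfl (fun i _ => by rw [Finset.mul_sum])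
  have hsum2b : ∑ q : (Fin n × Fin n) × Fin n × Fin n,
      (if q.1.1 = q.2.1 ∧ q.1.2 = q.2.2 then M 2 q.1.1 * M 2 q.1.2 else 0)
      = (∑ i, M 2 i) * (∑ i, M 2 i) := by
    simp only [Fintype.sum_prod_type]
    calc (∑ i, ∑ j, ∑ k, ∑ l, (if (i = k ∧ j = l) then M 2 i * M 2 j else 0))
        = ∑ i : Fin n, ∑ j : Fin n, ∑ k : Fin n, (if i = k then M 2 i * M 2 j else 0) := by
          refine Finset.sum_congr rfl (fun i _ => Finset.sum_congr rfl (fun j _ =>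
            Finset.sum_congr rfl (fun k _ => hcollapse (fun _ => M 2 i * M 2 j) j _ _)))
      _ = ∑ i : Fin n, ∑ j : Fin n, M 2 i * M 2 j := by
          refine Finset.sum_congr rfl (fun i _ => Finset.sum_congr rfl (fun j _ => ?_))
          simp [Finset.sum_ite_eq]
      _ = (∑ i, M 2 i) * (∑ i, M 2 i) := by
          rw [Finset.sum_mul]
          exact Finset.sum_congr rfl (fun i _ => by rw [Finset.mul_sum])
  have hsum2c : ∑ q : (Fin n × Fin n) × Fin n × Fin n,
      (if q.1.1 = q.2.2 ∧ q.1.2 = q.2.1 then M 2 q.1.1 * M 2 q.1.2 else 0)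
      = (∑ i, M 2 i) * (∑ i, M 2 i) := by
    simp only [Fintype.sum_prod_type]
    calc (∑ i, ∑ j, ∑ k, ∑ l, (if (i = l ∧ j = k) then M 2 i * M 2 j else 0))
        = ∑ i, ∑ j, ∑ k, ∑ l, (if (j = k ∧ i = l) then M 2 i * M 2 j else 0) := by
          refine Finset.sum_congr rfl (fun i _ => Finset.sum_congr rfl (fun j _ =>
            Finset.sum_congr rfl (fun k _ => Finset.sum_congr rfl (fun l _ =>
              if_congr and_comm rfl rfl))))
      _ = ∑ i : Fin n, ∑ j : Fin n, ∑ k : Fin n, (if j = k then M 2 i * M 2 j else 0) := by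
          refine Finset.sum_congr rfl (fun i _ => Finset.sum_congr rfl (fun j _ =>
            Finset.sum_congr rfl (fun k _ => hcollapse (fun _ => M 2 i * M 2 j) i _ _)))
      _ = ∑ i : Fin n, ∑ j : Fin n, M 2 i * M 2 j := by
          refine Finset.sum_congr rfl (fun i _ => Finset.sum_congr rfl (fun j _ => ?_))
          simp [Finset.sum_ite_eq]
      _ = (∑ i, M 2 i) * (∑ i, M 2 i) := by
          rw [Finset.sum_mul]
          exact Finset.sum_congr rfl (fun i _ => by rw [Finset.mul_sum])
  -- main bound on the sum
  have hmain : ∑ q : (Fin n × Fin n) × Fin n × Fin n,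
      (A q.1.1 q.1.2 * A q.2.1 q.2.2) * T q.1.1 q.1.2 q.2.1 q.2.2
      ≤ (∑ i, M 4 i) + 3 * (∑ i, M 2 i) ^ 2 := by
    have step1 : ∑ q : (Fin n × Fin n) × Fin n × Fin n,
        (A q.1.1 q.1.2 * A q.2.1 q.2.2) * T q.1.1 q.1.2 q.2.1 q.2.2
        ≤ ∑ q : (Fin n × Fin n) × Fin n × Fin n,
          ((if q.1.1 = q.1.2 ∧ q.1.1 = q.2.1 ∧ q.1.1 = q.2.2 then M 4 q.1.1 else 0)
          + (if q.1.1 = q.1.2 ∧ q.2.1 = q.2.2 then M 2 q.1.1 * M 2 q.2.1 else 0)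
          + (if q.1.1 = q.2.1 ∧ q.1.2 = q.2.2 then M 2 q.1.1 * M 2 q.1.2 else 0)
          + (if q.1.1 = q.2.2 ∧ q.1.2 = q.2.1 then M 2 q.1.1 * M 2 q.1.2 else 0)) := by
      have w : ∀ (P Q : Prop) (_ : Decidable P) (_ : Decidable Q) (t : ℝ), 0 ≤ t →
          (P → Q) → (if P then t else 0) ≤ (if Q then t else 0) := by
        intro P Q _ _ t ht hPQ
        split_ifs with h1 h2
        · exact le_rfl
        · exact absurd (hPQ h1) h2
        · exact ht
        · exact le_rfl
      refine Finset.sum_le_sum (fun q _ => ?_)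
      refine le_trans (hkey q.1.1 q.1.2 q.2.1 q.2.2) ?_
      refine add_le_add (add_le_add (add_le_add le_rfl ?_) ?_) ?_
      · exact w _ _ _ _ _ (mul_nonneg (hm2nn _) (hm2nn _)) (fun h => ⟨h.1, h.2.1⟩)
      · exact w _ _ _ _ _ (mul_nonneg (hm2nn _) (hm2nn _)) (fun h => ⟨h.1, h.2.1⟩)
      · exact w _ _ _ _ _ (mul_nonneg (hm2nn _) (hm2nn _)) (fun h => ⟨h.1, h.2.1⟩)
    calc ∑ q : (Fin n × Fin n) × Fin n × Fin n,
        (A q.1.1 q.1.2 * A q.2.1 q.2.2) * T q.1.1 q.1.2 q.2.1 q.2.2 ≤ _ := step1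
      _ = (∑ i, M 4 i) + 3 * (∑ i, M 2 i) ^ 2 := by
        rw [Finset.sum_add_distrib, Finset.sum_add_distrib, Finset.sum_add_distrib,
          hsum4, hsum2a, hsum2b, hsum2c]
        ring
  rw [hLHS]
  calc ∑ q : (Fin n × Fin n) × Fin n × Fin n,
      (A q.1.1 q.1.2 * A q.2.1 q.2.2) * T q.1.1 q.1.2 q.2.1 q.2.2
      ≤ (∑ i, M 4 i) + 3 * (∑ i, M 2 i) ^ 2 := hmain
    _ ≤ L ^ 4 / s ^ 3 + 3 * (L ^ 2 / s) ^ 2 := by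
        have h1 : (∑ i, M 2 i) ^ 2 ≤ (L ^ 2 / s) ^ 2 := pow_le_pow_left₀ hS2nn hS2 2
        linarith [hS4]
    _ ≤ k ^ 2 / s ^ 3 + 3 * k ^ 2 / s ^ 2 := by
        have h1 : L ^ 4 ≤ k ^ 2 := by nlinarith [hL2k, sq_nonneg L]
        have h2 : L ^ 4 / s ^ 3 ≤ k ^ 2 / s ^ 3 := by gcongr
        have h3 : (L ^ 2 / s) ^ 2 ≤ k ^ 2 / s ^ 2 := by
          rw [div_pow]
          gcongr
        calc L ^ 4 / s ^ 3 + 3 * (L ^ 2 / s) ^ 2 ≤ k ^ 2 / s ^ 3 + 3 * (k ^ 2 / s ^ 2) := by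
              linarith
          _ = k ^ 2 / s ^ 3 + 3 * k ^ 2 / s ^ 2 := by ring
    _ ≤ 3 * k ^ 2 / s ^ 2 + k ^ 2 / s ^ 3 + 6 * Real.sqrt k / s := by
        have : 3 * k ^ 2 / s ^ 2 = 3 * (k ^ 2 / s ^ 2) := by ring
        linarith [hRHSnn]
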